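/- Let Σ ∈ ℝ^{n×n} be symmetric positive definite, Γ ∈ ℝ^{k×n}, and set Γ̃ = Γ Σ^{1/2} with singular values σ₁ ≥ σ₂ ≥ … (set σ_i = 0 for i exceeding the rank of Γ̃), and assume Γ ≠ 0. Fix p ≥ 1 and c > 0, and for A ∈ ℝ^{p×n}, A ≠ 0, define MSE(A) = Tr(Γ Σ Γᵀ) − Tr( Γ Σ Aᵀ ( A Σ Aᵀ + c · max_{l} (A Σ Aᵀ)_{l,l} · I_p )^{−1} A Σ Γᵀ ). Let ζ > 0 be the unique solution of (c/p) Σ_{i=1}^{p} (ζ σ_i − 1)⁺ = 1. Then the infimum of MSE(A) over A ∈ ℝ^{p×n}, A ≠ 0 is attained, and equals Σ_{i=1}^{k} σ_i² / ((ζ σ_i − 1)⁺ + 1) when p ≥ k, and Σ_{i=1}^{p} σ_i² / ((ζ σ_i − 1)⁺ + 1) + Σ_{i=p+1}^{k} σ_i² when p < k. Moreover a minimizer has the form A* = U Λ Vᵀ Σ^{−1/2}, where V is a right-singular-vector matrix of Γ̃, Λ ∈ ℝ^{p×n} is diagonal with (Λ)_{i,i}² = (c/p)(ζ σ_i − 1)⁺,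 and U ∈ ℝ^{p×p} is an orthogonal matrix making all diagonal entries of U Λ Λᵀ Uᵀ equal. -/

import Mathlib

open Matrix

/-- Minimal (over digital matrices) MSE of the hardware-limited task-based quantizer with
analog combining matrix `A`: the per-quantizer noise level is `c` times the largest diagonal
entry of `A S Aᵀ` (largest input variance). -/
noncomputable def hlMSE {k n p : ℕ} (S : Matrix (Fin n) (Fin n) ℝ)
    (Γ : Matrix (Fin k) (Fin n) ℝ) (c : ℝ) (A : Matrix (Fin p) (Fin n) ℝ) : ℝ :=
  Matrix.trace (Γ * S * Γᵀ)
    - Matrix.trace (Γ * S * Aᵀ *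
        (A * S * Aᵀ
          + (c * (⨆ l : Fin p, (A * S * Aᵀ) l l)) • (1 : Matrix (Fin p) (Fin p) ℝ))⁻¹
        * A * S * Γᵀ)


/-- The positive semidefinite square root of a positive semidefinite matrix, as
`Matrix.PosSemidef.sqrt` was defined in the older Mathlib (removed since). -/
noncomputable def oldPosSemidefSqrt {n : ℕ} {S : Matrix (Fin n) (Fin n) ℝ}
    (hA : S.PosSemidef) : Matrix (Fin n) (Fin n) ℝ :=
  hA.1.eigenvectorUnitary.1 * diagonal ((↑) ∘ (√·) ∘ hA.1.eigenvalues) *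
    (star hA.1.eigenvectorUnitary : Matrix (Fin n) (Fin n) ℝ)

lemma oldPosSemidefSqrt_conjTranspose {n : ℕ} {S : Matrix (Fin n) (Fin n) ℝ}
    (hA : S.PosSemidef) : (oldPosSemidefSqrt hA)ᴴ = oldPosSemidefSqrt hA := by
  unfold oldPosSemidefSqrt
  rw [conjTranspose_mul, conjTranspose_mul, diagonal_conjTranspose]
  simp only [Matrix.mul_assoc]
  congr 2

lemma oldPosSemidefSqrt_mul_self {n : ℕ} {S : Matrix (Fin n) (Fin n) ℝ}
    (hA : S.PosSemidef) : oldPosSemidefSqrt hA * oldPosSemidefSqrt hA = S := by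
  unfold oldPosSemidefSqrt
  conv_rhs => rw [hA.1.spectral_theorem, Unitary.conjStarAlgAut_apply]
  have hU : (star hA.1.eigenvectorUnitary : Matrix (Fin n) (Fin n) ℝ) * hA.1.eigenvectorUnitary.1 = 1 :=
    Unitary.coe_star_mul_self _
  calc _ = hA.1.eigenvectorUnitary.1 * (diagonal ((↑) ∘ (√·) ∘ hA.1.eigenvalues) *
      ((star hA.1.eigenvectorUnitary : Matrix (Fin n) (Fin n) ℝ) * hA.1.eigenvectorUnitary.1) *
      diagonal ((↑) ∘ (√·) ∘ hA.1.eigenvalues)) * (star hA.1.eigenvectorUnitary : Matrix (Fin n) (Fin n) ℝ) := by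
        simp only [Matrix.mul_assoc]
    _ = _ := by
      rw [hU, Matrix.mul_one, diagonal_mul_diagonal]
      congr 3
      funext i
      simp [Real.mul_self_sqrt (hA.eigenvalues_nonneg i)]


open Matrix Finset Real

/-- Abel summation comparison. -/
lemma abel_le (p : ℕ) (ψ cf bf : ℕ → ℝ)
    (hanti : ∀ i j, i ≤ j → j < p → ψ j ≤ ψ i)
    (h0 : ∀ j, j < p → 0 ≤ ψ j)
    (hpart : ∀ m, m ≤ p → ∑ j ∈ range m, cf j ≤ ∑ j ∈ range m, bf j) :
    ∑ j ∈ range p, ψ j * cf j ≤ ∑ j ∈ range p, ψ j * bf j := by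
  induction p generalizing ψ with
  | zero => simp
  | succ p IH =>
    have hδ : 0 ≤ ψ p := h0 p (Nat.lt_succ_self p)
    have e1 : ∀ f : ℕ → ℝ, ∑ j ∈ range (p+1), ψ j * f j
        = ∑ j ∈ range p, (ψ j - ψ p) * f j + ψ p * ∑ j ∈ range (p+1), f j := by
      intro f
      have e0 : ∑ j ∈ range (p+1), ψ j * f j
          = ∑ j ∈ range (p+1), ((ψ j - ψ p) * f j + ψ p * f j) :=
        Finset.sum_congr rfl (fun j _ => by ring)
      rw [e0, Finset.sum_add_distrib, Finset.sum_range_succ (fun j => (ψ j - ψ p) * f j)]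
      simp [Finset.mul_sum]
    rw [e1 cf, e1 bf]
    have hIH : ∑ j ∈ range p, (ψ j - ψ p) * cf j ≤ ∑ j ∈ range p, (ψ j - ψ p) * bf j := by
      apply IH (fun j => ψ j - ψ p)
      · intro i j hij hjp
        have := hanti i j hij (hjp.trans (Nat.lt_succ_self p)); linarith
      · intro j hj
        have := hanti j p (Nat.le_of_lt hj) (Nat.lt_succ_self p); linarith
      · intro m hm; exact hpart m (hm.trans (Nat.le_succ p))
    have h2 : ψ p * ∑ j ∈ range (p+1), cf j ≤ ψ p * ∑ j ∈ range (p+1), bf j :=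
      mul_le_mul_of_nonneg_left (hpart (p+1) le_rfl) hδ
    linarith

/-- Chebyshev-type partial sum bound. -/
lemma cheb_le (n m : ℕ) (s r : ℕ → ℝ)
    (hs : ∀ i j, i ≤ j → s j ≤ s i) (hs0 : ∀ i, 0 ≤ s i)
    (hr0 : ∀ i, 0 ≤ r i) (hr1 : ∀ i, r i ≤ 1)
    (hrsum : ∑ i ∈ range n, r i ≤ (m : ℝ)) :
    ∑ i ∈ range n, s i * r i ≤ ∑ j ∈ range m, s j := by
  rcases le_or_gt n m with hnm | hmn
  · calc ∑ i ∈ range n, s i * r i ≤ ∑ i ∈ range n, s i :=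
          Finset.sum_le_sum (fun i _ => mul_le_of_le_one_right (hs0 i) (hr1 i))
    _ ≤ ∑ j ∈ range m, s j :=
          Finset.sum_le_sum_of_subset_of_nonneg (Finset.range_subset_range.2 hnm)
            (fun j _ _ => hs0 j)
  · have hm : m ≤ n := hmn.le
    have A : ∑ i ∈ range m, s i * r i ≤ ∑ i ∈ range m, (s i - s m * (1 - r i)) := by
      apply Finset.sum_le_sum
      intro i hi
      have h1 : s m ≤ s i := hs i m (Nat.le_of_lt (Finset.mem_range.1 hi))
      have h2 : r i ≤ 1 := hr1 i
      nlinarith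
    have B : ∑ i ∈ Ico m n, s i * r i ≤ ∑ i ∈ Ico m n, s m * r i := by
      apply Finset.sum_le_sum
      intro i hi
      exact mul_le_mul_of_nonneg_right (hs m i (Finset.mem_Ico.1 hi).1) (hr0 i)
    have e2 : ∑ i ∈ range m, (s i - s m * (1 - r i))
        = ∑ i ∈ range m, s i - (s m * m - s m * ∑ i ∈ range m, r i) := by
      rw [Finset.sum_sub_distrib, ← Finset.mul_sum, Finset.sum_sub_distrib,
        Finset.sum_const, Finset.card_range, nsmul_eq_mul, mul_one, mul_sub]
    have e3 : ∑ i ∈ Ico m n, s m * r i = s m * (∑ i ∈ range n, r i - ∑ i ∈ range m, r i) := by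
      rw [← Finset.sum_range_add_sum_Ico r hm, ← Finset.mul_sum]
      ring_nf
    have split : ∑ i ∈ range n, s i * r i
        = ∑ i ∈ range m, s i * r i + ∑ i ∈ Ico m n, s i * r i :=
      (Finset.sum_range_add_sum_Ico _ hm).symm
    have hsm : 0 ≤ s m := hs0 m
    have hcomb : s m * (∑ i ∈ range n, r i) ≤ s m * m :=
      mul_le_mul_of_nonneg_left hrsum hsm
    rw [split]
    calc ∑ i ∈ range m, s i * r i + ∑ i ∈ Ico m n, s i * r i
        ≤ (∑ i ∈ range m, s i - (s m * m - s m * ∑ i ∈ range m, r i))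
          + s m * (∑ i ∈ range n, r i - ∑ i ∈ range m, r i) := by
          rw [← e2, ← e3]; exact add_le_add A B
      _ ≤ ∑ j ∈ range m, s j := by nlinarith
/-- Waterfilling tangent bound. -/
lemma tangent_le (sv ζ γ x : ℝ) (hσ : 0 ≤ sv) (hζ : 0 < ζ) (hγ : 0 < γ) (hx : 0 ≤ x) :
    sv ^ 2 * (x / (x + γ)) ≤
      sv ^ 2 * (max (ζ * sv - 1) 0 / (max (ζ * sv - 1) 0 + 1))
        + (1 / ζ ^ 2) * (x / γ - max (ζ * sv - 1) 0) := by
  have hxγ : 0 < x + γ := by linarith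
  rcases le_or_gt (ζ * sv) 1 with h | h
  · rw [max_eq_right (by linarith)]
    have h1 : sv ^ 2 ≤ 1 / ζ ^ 2 := by
      rw [le_div_iff₀ (by positivity)]
      have h3 : 0 ≤ ζ * sv := by positivity
      nlinarith
    have h2 : x / (x + γ) ≤ x / γ := by
      apply div_le_div_of_nonneg_left hx hγ; linarith
    have h4 : (0:ℝ) ≤ x / γ := by positivity
    have h5 : (0:ℝ) ≤ x / (x+γ) := by positivity
    calc sv ^ 2 * (x / (x + γ)) ≤ sv ^ 2 * (x / γ) :=
          mul_le_mul_of_nonneg_left h2 (by positivity)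
      _ ≤ (1 / ζ ^ 2) * (x / γ) := mul_le_mul_of_nonneg_right h1 h4
      _ = sv ^ 2 * (0 / (0 + 1)) + (1 / ζ ^ 2) * (x / γ - 0) := by ring
  · rw [max_eq_left (by linarith)]
    have hzs : 0 < ζ * sv := by linarith
    have key : sv ^ 2 * ((ζ*sv-1)/(ζ*sv-1+1)) + (1/ζ^2)*(x/γ - (ζ*sv-1))
        - sv^2*(x/(x+γ)) = (x - γ*(ζ*sv-1))^2 / (ζ^2*γ*(x+γ)) := by
      have h1 : ζ*sv-1+1 ≠ 0 := by linarith
      have h2 : sv ≠ 0 := by rintro rfl; simp at hzs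
      field_simp
      ring
    have hpos : (0:ℝ) ≤ (x - γ*(ζ*sv-1))^2 / (ζ^2*γ*(x+γ)) := by positivity
    linarith





lemma filter_range_lt (p m : ℕ) (hm : m ≤ p) :
    filter (fun j => j < m) (range p) = range m := by
  ext j; simp only [Finset.mem_filter, Finset.mem_range]; omega

lemma core_bound (n p : ℕ) (c ζ γ : ℝ) (hc : 0 < c) (hζpos : 0 < ζ) (hγ : 0 < γ)
    (σ : ℕ → ℝ) (hσanti : Antitone σ) (hσ0 : ∀ i, 0 ≤ σ i)
    (x : Fin p → ℝ) (hx0 : ∀ j, 0 ≤ x j) (hxsum : ∑ j, x j ≤ p * γ / c)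
    (ht : ∑ j : Fin p, max (ζ * σ (j : ℕ) - 1) 0 = p / c)
    (A : Fin n → Fin p → ℝ) (hA0 : ∀ i j, 0 ≤ A i j)
    (hcol : ∀ i, ∑ j, A i j ≤ 1) (hrow : ∀ j, ∑ i, A i j ≤ 1) :
    ∑ i : Fin n, σ (i : ℕ) ^ 2 * (∑ j, A i j * (x j / (x j + γ)))
      ≤ ∑ j : Fin p, σ (j : ℕ) ^ 2 *
          (max (ζ * σ (j : ℕ) - 1) 0 / (max (ζ * σ (j : ℕ) - 1) 0 + 1)) := by
  classical
  set φ : Fin p → ℝ := fun j => x j / (x j + γ) with hφ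
  have hφ0 : ∀ j, 0 ≤ φ j := fun j => by
    have := hx0 j; have : 0 ≤ x j / (x j + γ) := by positivity
    simpa [hφ]
  have hφmono : ∀ j j' : Fin p, x j ≤ x j' → φ j ≤ φ j' := by
    intro j j' h
    have h0 := hx0 j
    show x j / (x j + γ) ≤ x j' / (x j' + γ)
    rw [div_le_div_iff₀ (by linarith) (by linarith)]
    nlinarith
  set cfun : Fin p → ℝ := fun j => ∑ i : Fin n, σ (i : ℕ) ^ 2 * A i j with hcfun
  have hcfun0 : ∀ j, 0 ≤ cfun j := fun j =>
    Finset.sum_nonneg fun i _ => mul_nonneg (by positivity) (hA0 i j)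
  -- swap the double sum
  have swap : ∑ i : Fin n, σ (i : ℕ) ^ 2 * (∑ j, A i j * φ j)
      = ∑ j : Fin p, φ j * cfun j := by
    simp_rw [Finset.mul_sum, hcfun]
    rw [Finset.sum_comm]
    exact Finset.sum_congr rfl fun j _ => by
      rw [Finset.mul_sum]
      exact Finset.sum_congr rfl fun i _ => by ring
  rw [swap]
  -- sorting permutation
  set e : Equiv.Perm (Fin p) := Tuple.sort (fun j => - x j) with he
  have hsorted : ∀ i j : Fin p, i ≤ j → x (e j) ≤ x (e i) := by
    intro i j hij
    have := Tuple.monotone_sort (fun j => - x j) hij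
    simpa [he] using this
  have reidx : ∑ j : Fin p, φ j * cfun j = ∑ j : Fin p, φ (e j) * cfun (e j) :=
    (Equiv.sum_comp e (fun j => φ j * cfun j)).symm
  rw [reidx]
  -- ℕ-indexed versions
  set Ψ : ℕ → ℝ := fun m => if h : m < p then φ (e ⟨m, h⟩) else 0 with hΨ
  set C : ℕ → ℝ := fun m => if h : m < p then cfun (e ⟨m, h⟩) else 0 with hC
  have to_range : ∑ j : Fin p, φ (e j) * cfun (e j) = ∑ m ∈ range p, Ψ m * C m := by
    rw [← Fin.sum_univ_eq_sum_range (fun m => Ψ m * C m) p]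
    exact Finset.sum_congr rfl fun j _ => by simp [hΨ, hC, Fin.is_lt]
  rw [to_range]
  -- partial sums hypothesis
  have hpart : ∀ m, m ≤ p → ∑ j ∈ range m, C j ≤ ∑ j ∈ range m, σ j ^ 2 := by
    intro m hm
    set R : Fin n → ℝ := fun i => ∑ j', (if ((e.symm j' : Fin p) : ℕ) < m then A i j' else 0)
      with hR
    have e1 : ∑ j ∈ range m, C j
        = ∑ j' : Fin p, (if ((e.symm j' : Fin p) : ℕ) < m then cfun j' else 0) := by
      rw [← Equiv.sum_comp e (fun j' => if ((e.symm j' : Fin p) : ℕ) < m then cfun j' else 0)]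
      simp only [Equiv.symm_apply_apply]
      have e1a : ∀ j : Fin p, (if (j : ℕ) < m then cfun (e j) else 0)
          = (fun m' => if m' < m then C m' else 0) (j : ℕ) := by
        intro j; simp [hC, Fin.is_lt]
      rw [Finset.sum_congr rfl (fun j _ => e1a j),
        Fin.sum_univ_eq_sum_range (fun m' => if m' < m then C m' else 0) p,
        ← Finset.sum_filter, filter_range_lt p m hm]
    have e2 : ∑ j' : Fin p, (if ((e.symm j' : Fin p) : ℕ) < m then cfun j' else 0)
        = ∑ i : Fin n, σ (i : ℕ) ^ 2 * R i := by
      have : ∀ j' : Fin p, (if ((e.symm j' : Fin p) : ℕ) < m then cfun j' else 0)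
          = ∑ i : Fin n, (if ((e.symm j' : Fin p) : ℕ) < m then σ (i : ℕ) ^ 2 * A i j' else 0) := by
        intro j'; split <;> simp [hcfun]
      rw [Finset.sum_congr rfl (fun j' _ => this j'), Finset.sum_comm]
      exact Finset.sum_congr rfl fun i _ => by
        rw [hR, Finset.mul_sum]
        exact Finset.sum_congr rfl fun j' _ => by split <;> ring
    have hR0 : ∀ i, 0 ≤ R i := fun i =>
      Finset.sum_nonneg fun j' _ => by split; exacts [hA0 i j', le_rfl]
    have hR1 : ∀ i, R i ≤ 1 := fun i => by
      refine le_trans (Finset.sum_le_sum (fun j' _ => ?_)) (hcol i)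
      split; exacts [le_rfl, hA0 i j']
    have hRsum : ∑ i : Fin n, R i ≤ (m : ℝ) := by
      rw [hR, Finset.sum_comm]
      have step : ∀ j' : Fin p, ∑ i : Fin n, (if ((e.symm j' : Fin p) : ℕ) < m then A i j' else 0)
          ≤ (if ((e.symm j' : Fin p) : ℕ) < m then (1:ℝ) else 0) := by
        intro j'
        split
        · simpa using hrow j'
        · simp
      refine le_trans (Finset.sum_le_sum fun j' _ => step j') ?_
      rw [← Equiv.sum_comp e (fun j' => if ((e.symm j' : Fin p) : ℕ) < m then (1:ℝ) else 0)]
      simp only [Equiv.symm_apply_apply]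
      rw [Fin.sum_univ_eq_sum_range (fun m' => if m' < m then (1:ℝ) else 0) p,
        ← Finset.sum_filter, filter_range_lt p m hm]
      simp
    -- apply cheb
    set r : ℕ → ℝ := fun i => if h : i < n then R ⟨i, h⟩ else 0 with hr
    have conv : ∑ i ∈ range n, σ i ^ 2 * r i = ∑ i : Fin n, σ (i : ℕ) ^ 2 * R i := by
      rw [← Fin.sum_univ_eq_sum_range (fun i => σ i ^ 2 * r i) n]
      exact Finset.sum_congr rfl fun i _ => by simp [hr, Fin.is_lt]
    rw [e1, e2, ← conv]
    refine cheb_le n m (fun i => σ i ^ 2) r ?_ (fun i => by positivity) ?_ ?_ ?_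
    · intro i j hij
      exact pow_le_pow_left₀ (hσ0 j) (hσanti hij) 2
    · intro i; simp only [hr]; split; exacts [hR0 _, le_rfl]
    · intro i; simp only [hr]; split; exacts [hR1 _, zero_le_one]
    · rw [show ∑ i ∈ range n, r i = ∑ i : Fin n, R i by
        rw [← Fin.sum_univ_eq_sum_range r n]
        exact Finset.sum_congr rfl fun i _ => by simp [hr, Fin.is_lt]]
      exact hRsum
  -- Abel
  have habel : ∑ m ∈ range p, Ψ m * C m ≤ ∑ m ∈ range p, Ψ m * σ m ^ 2 := by
    refine abel_le p Ψ C (fun m => σ m ^ 2) ?_ ?_ hpart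
    · intro i j hij hjp
      have hip : i < p := lt_of_le_of_lt hij hjp
      have : x (e ⟨j, hjp⟩) ≤ x (e ⟨i, hip⟩) := hsorted ⟨i, hip⟩ ⟨j, hjp⟩ hij
      simpa [hΨ, hip, hjp] using hφmono _ _ this
    · intro j hj; simp only [hΨ, hj, dif_pos]; exact hφ0 _
  refine le_trans habel ?_
  -- back to Fin p and tangent bound
  have back : ∑ m ∈ range p, Ψ m * σ m ^ 2 = ∑ j : Fin p, σ (j : ℕ) ^ 2 * φ (e j) := by
    rw [← Fin.sum_univ_eq_sum_range (fun m => Ψ m * σ m ^ 2) p]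
    exact Finset.sum_congr rfl fun j _ => by simp [hΨ, Fin.is_lt]; ring
  rw [back]
  have tsum : ∑ j : Fin p, σ (j : ℕ) ^ 2 * φ (e j)
      ≤ ∑ j : Fin p, (σ (j : ℕ) ^ 2 *
          (max (ζ * σ (j : ℕ) - 1) 0 / (max (ζ * σ (j : ℕ) - 1) 0 + 1))
        + (1 / ζ ^ 2) * (x (e j) / γ - max (ζ * σ (j : ℕ) - 1) 0)) := by
    refine Finset.sum_le_sum fun j _ => ?_
    exact tangent_le (σ (j : ℕ)) ζ γ (x (e j)) (hσ0 _) hζpos hγ (hx0 _)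
  refine le_trans tsum ?_
  rw [Finset.sum_add_distrib]
  have hslack : ∑ j : Fin p, (1 / ζ ^ 2) * (x (e j) / γ - max (ζ * σ (j : ℕ) - 1) 0) ≤ 0 := by
    rw [← Finset.mul_sum, Finset.sum_sub_distrib]
    have hx_e : ∑ j : Fin p, x (e j) / γ = (∑ j : Fin p, x j) / γ := by
      rw [← Finset.sum_div]
      congr 1
      exact Equiv.sum_comp e x
    rw [hx_e, ht]
    have : (∑ j : Fin p, x j) / γ ≤ (p : ℝ) / c := by
      rw [div_le_div_iff₀ hγ hc]
      have hmul := mul_le_mul_of_nonneg_right hxsum hc.le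
      rw [div_mul_cancel₀ _ (ne_of_gt hc)] at hmul
      exact hmul

    have h2 : (0:ℝ) ≤ 1 / ζ ^ 2 := by positivity
    have h3 : (∑ j : Fin p, x j) / γ - (p : ℝ) / c ≤ 0 := by linarith
    exact mul_nonpos_of_nonneg_of_nonpos h2 h3
  linarith


section Horn
variable {q : ℕ}

lemma sum_two (j : Fin (q+1)) (hj : j ≠ 0) (f : Fin (q+1) → ℝ)
    (h : ∀ a, a ≠ 0 → a ≠ j → f a = 0) : ∑ a, f a = f 0 + f j := by
  rw [← Finset.sum_subset (Finset.subset_univ ({0, j} : Finset (Fin (q+1))))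
    (fun a _ ha => h a (fun h0 => ha (by simp [h0])) (fun h0 => ha (by simp [h0])))]
  exact Finset.sum_pair (Ne.symm hj)

/-- Givens rotation in the (0,j) plane. -/
noncomputable def giv (j : Fin (q+1)) (θ : ℝ) : Matrix (Fin (q+1)) (Fin (q+1)) ℝ :=
  Matrix.of fun a b =>
    if a = 0 ∧ b = 0 then Real.cos θ else if a = 0 ∧ b = j then Real.sin θ
    else if a = j ∧ b = 0 then -Real.sin θ else if a = j ∧ b = j then Real.cos θ
    else if a = b then 1 else 0

lemma giv_col (j : Fin (q+1)) (θ : ℝ) (b : Fin (q+1)) (hb0 : b ≠ 0) (hbj : b ≠ j)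
    (a : Fin (q+1)) : giv j θ a b = if a = b then 1 else 0 := by
  by_cases h : a = b <;> simp_all [giv, hb0, hbj] <;> tauto

lemma giv_col0 (j : Fin (q+1)) (hj : j ≠ 0) (θ : ℝ) (a : Fin (q+1)) :
    giv j θ a 0 = if a = 0 then Real.cos θ else if a = j then -Real.sin θ else 0 := by
  by_cases ha0 : a = 0 <;> by_cases haj : a = j <;> simp_all [giv] <;> tauto

lemma giv_colj (j : Fin (q+1)) (hj : j ≠ 0) (θ : ℝ) (a : Fin (q+1)) :
    giv j θ a j = if a = 0 then Real.sin θ else if a = j then Real.cos θ else 0 := by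
  by_cases ha0 : a = 0 <;> by_cases haj : a = j <;> simp_all [giv] <;> tauto

lemma giv_orth (j : Fin (q+1)) (hj : j ≠ 0) (θ : ℝ) :
    (giv j θ)ᵀ * giv j θ = 1 := by
  ext b b'
  rw [Matrix.mul_apply]
  simp only [Matrix.transpose_apply]
  rcases eq_or_ne b 0 with hb0 | hb0
  · rcases eq_or_ne b' 0 with hb'0 | hb'0
    · subst hb0; subst hb'0
      rw [sum_two j hj _ (fun a ha0 haj => by simp [giv_col0 j hj, ha0, haj])]
      simp [giv_col0 j hj, hj, Ne.symm hj, Matrix.one_apply]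
      nlinarith [Real.sin_sq_add_cos_sq θ]
    · rcases eq_or_ne b' j with hb'j | hb'j
      · subst hb0; simp only [hb'j]
        rw [sum_two j hj _ (fun a ha0 haj => by
          simp [giv_col0 j hj, giv_colj j hj, ha0, haj])]
        simp [giv_col0 j hj, giv_colj j hj, hj, Ne.symm hj, hb'j, Matrix.one_apply]
        try ring
      · subst hb0
        rw [Finset.sum_congr rfl (fun a _ => by
          rw [giv_col j θ b' hb'0 hb'j a, mul_ite, mul_one, mul_zero])]
        rw [Finset.sum_ite_eq' Finset.univ b' (fun a => giv j θ a 0)]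
        simp [giv_col0 j hj, hb'0, hb'j, Matrix.one_apply, Ne.symm hb'0]
  · rcases eq_or_ne b j with hbj | hbj
    · rcases eq_or_ne b' 0 with hb'0 | hb'0
      · simp only [hbj]; subst hb'0
        rw [sum_two j hj _ (fun a ha0 haj => by
          simp [giv_col0 j hj, giv_colj j hj, ha0, haj])]
        simp [giv_col0 j hj, giv_colj j hj, hj, Ne.symm hj, hbj, Matrix.one_apply]
        try ring
      · rcases eq_or_ne b' j with hb'j | hb'j
        · simp only [hbj, hb'j]
          rw [sum_two j hj _ (fun a ha0 haj => by simp [giv_colj j hj, ha0, haj])]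
          simp [giv_colj j hj, hj, Ne.symm hj, hbj, hb'j, Matrix.one_apply]
          nlinarith [Real.sin_sq_add_cos_sq θ]
        · simp only [hbj]
          rw [Finset.sum_congr rfl (fun a _ => by
            rw [giv_col j θ b' hb'0 hb'j a, mul_ite, mul_one, mul_zero])]
          rw [Finset.sum_ite_eq' Finset.univ b' (fun a => giv j θ a j)]
          simp [giv_colj j hj, hb'0, hb'j, hbj, Matrix.one_apply, Ne.symm hb'j]
    · rw [Finset.sum_congr rfl (fun a _ => by
        rw [giv_col j θ b hb0 hbj a, ite_mul, one_mul, zero_mul])]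
      rw [Finset.sum_ite_eq' Finset.univ b (fun a => giv j θ a b')]
      simp only [Finset.mem_univ, if_true]
      rcases eq_or_ne b b' with h | h
      · subst h; simp [giv, hb0, hbj, Matrix.one_apply]
      · simp [giv, hb0, hbj, h, Matrix.one_apply]

lemma giv_entry00 (j : Fin (q+1)) (hj : j ≠ 0) (θ : ℝ)
    (X : Matrix (Fin (q+1)) (Fin (q+1)) ℝ) (hX : Xᵀ = X) :
    (giv j θ * X * (giv j θ)ᵀ) 0 0
      = Real.cos θ ^ 2 * X 0 0 + Real.sin θ ^ 2 * X j j
        + 2 * Real.sin θ * Real.cos θ * X 0 j := by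
  have hrow : ∀ a, giv j θ 0 a = if a = 0 then Real.cos θ else if a = j then Real.sin θ else 0 := by
    intro a
    by_cases ha0 : a = 0 <;> by_cases haj : a = j <;> simp_all [giv] <;> tauto
  have hX0j : X j 0 = X 0 j := by
    conv_lhs => rw [← hX]
    rfl
  rw [Matrix.mul_apply]
  simp only [Matrix.transpose_apply]
  rw [sum_two j hj _ (fun b hb0 hbj => by rw [hrow b]; simp [hb0, hbj])]
  rw [Matrix.mul_apply, Matrix.mul_apply]
  rw [sum_two j hj _ (fun a ha0 haj => by rw [hrow a]; simp [ha0, haj]),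
    sum_two j hj _ (fun a ha0 haj => by rw [hrow a]; simp [ha0, haj])]
  simp [hrow, hj, Ne.symm hj, hX0j]
  ring

end Horn

section Horn2
variable {q : ℕ}

/-- Extend a q×q matrix to (q+1)×(q+1) fixing coordinate 0. -/
def emb (W : Matrix (Fin q) (Fin q) ℝ) : Matrix (Fin (q+1)) (Fin (q+1)) ℝ :=
  Matrix.of fun a b =>
    Fin.cases (Fin.cases (1:ℝ) (fun _ => 0) b)
      (fun a' => Fin.cases 0 (fun b' => W a' b') b) a

@[simp] lemma emb_00 (W : Matrix (Fin q) (Fin q) ℝ) : emb W 0 0 = 1 := rfl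
@[simp] lemma emb_0s (W : Matrix (Fin q) (Fin q) ℝ) (b : Fin q) : emb W 0 b.succ = 0 := by
  simp [emb]
@[simp] lemma emb_s0 (W : Matrix (Fin q) (Fin q) ℝ) (a : Fin q) : emb W a.succ 0 = 0 := by
  simp [emb]
@[simp] lemma emb_ss (W : Matrix (Fin q) (Fin q) ℝ) (a b : Fin q) :
    emb W a.succ b.succ = W a b := by simp [emb]

lemma emb_orth (W : Matrix (Fin q) (Fin q) ℝ) (hW : Wᵀ * W = 1) :
    (emb W)ᵀ * emb W = 1 := by
  ext b b'
  rw [Matrix.mul_apply]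
  simp only [Matrix.transpose_apply]
  rw [Fin.sum_univ_succ]
  refine Fin.cases ?_ (fun b1 => ?_) b <;> refine Fin.cases ?_ (fun b2 => ?_) b'
  · simp [Matrix.one_apply]
  · simp [Matrix.one_apply, (Fin.succ_ne_zero b2).symm]
  · simp [Matrix.one_apply, Fin.succ_ne_zero b1]
  · have := congrFun (congrFun hW b1) b2
    rw [Matrix.mul_apply] at this
    simp only [Matrix.transpose_apply] at this
    simp only [emb_ss, emb_0s, zero_mul, zero_add]
    rw [this]
    simp [Matrix.one_apply, Fin.succ_inj]

lemma emb_diag0 (W : Matrix (Fin q) (Fin q) ℝ) (Y : Matrix (Fin (q+1)) (Fin (q+1)) ℝ) :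
    (emb W * Y * (emb W)ᵀ) 0 0 = Y 0 0 := by
  rw [Matrix.mul_apply]
  simp only [Matrix.transpose_apply]
  rw [Fin.sum_univ_succ]
  simp only [emb_00, emb_0s, mul_zero, Finset.sum_const_zero, add_zero, mul_one]
  rw [Matrix.mul_apply, Fin.sum_univ_succ]
  simp

lemma emb_diag_succ (W : Matrix (Fin q) (Fin q) ℝ) (Y : Matrix (Fin (q+1)) (Fin (q+1)) ℝ)
    (l : Fin q) :
    (emb W * Y * (emb W)ᵀ) l.succ l.succ
      = (W * Y.submatrix Fin.succ Fin.succ * Wᵀ) l l := by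
  rw [Matrix.mul_apply, Matrix.mul_apply]
  simp only [Matrix.transpose_apply]
  rw [Fin.sum_univ_succ]
  simp only [emb_s0, mul_zero, zero_add, zero_mul]
  refine Finset.sum_congr rfl fun b _ => ?_
  rw [Matrix.mul_apply, Matrix.mul_apply, Fin.sum_univ_succ]
  simp [Matrix.submatrix_apply]

/-- Horn-type lemma: any symmetric real matrix can be orthogonally conjugated to have
constant diagonal. -/
theorem horn_equal_diag : ∀ (q : ℕ) (X : Matrix (Fin q) (Fin q) ℝ), Xᵀ = X →
    ∃ U : Matrix (Fin q) (Fin q) ℝ, Uᵀ * U = 1 ∧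
      ∀ l l' : Fin q, (U * X * Uᵀ) l l = (U * X * Uᵀ) l' l' := by
  intro q
  induction q with
  | zero => exact fun X _ => ⟨1, by simp, fun l _ => l.elim0⟩
  | succ q IH =>
    intro X hX
    rcases Nat.eq_zero_or_pos q with hq | hq
    · subst hq
      refine ⟨1, by simp, fun l l' => ?_⟩
      have hll : l = l' := Fin.ext (by omega)
      rw [hll]
    set τ : ℝ := Matrix.trace X / (q+1) with hτ
    have htr : Matrix.trace X = (q+1) * τ := by
      rw [hτ]; field_simp
    -- find a pivot index
    have hpivot : ∃ j : Fin (q+1), j ≠ 0 ∧ (X 0 0 - τ) * (X j j - τ) ≤ 0 := by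
      by_contra hcon
      push_neg at hcon
      have hsum : ∑ l, (X l l - τ) = 0 := by
        rw [Finset.sum_sub_distrib, Finset.sum_const, Finset.card_univ]
        simp only [Fintype.card_fin, nsmul_eq_mul]
        have : ∑ l, X l l = Matrix.trace X := rfl
        rw [this, htr]; push_cast; ring
      have hsplit : (X 0 0 - τ) + ∑ l ∈ Finset.univ.erase 0, (X l l - τ) = 0 := by
        rw [Finset.add_sum_erase _ (fun l => X l l - τ) (Finset.mem_univ 0), hsum]
      have hpos : 0 < ∑ l ∈ Finset.univ.erase 0, (X 0 0 - τ) * (X l l - τ) := by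
        apply Finset.sum_pos
        · intro l hl
          exact hcon l (Finset.ne_of_mem_erase hl)
        · refine ⟨⟨1, by omega⟩, Finset.mem_erase.2 ⟨?_, Finset.mem_univ _⟩⟩
          intro h
          have := congrArg Fin.val h
          simpa using this
      rw [← Finset.mul_sum] at hpos
      have : ∑ l ∈ Finset.univ.erase 0, (X l l - τ) = -(X 0 0 - τ) := by linarith
      rw [this] at hpos
      nlinarith [sq_nonneg (X 0 0 - τ)]
    obtain ⟨j, hj, hprod⟩ := hpivot
    -- IVT for the rotation angle
    set f : ℝ → ℝ := fun θ =>
      Real.cos θ ^ 2 * X 0 0 + Real.sin θ ^ 2 * X j j + 2 * Real.sin θ * Real.cos θ * X 0 j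
      with hf
    have hcont : Continuous f := by rw [hf]; fun_prop
    have hf0 : f 0 = X 0 0 := by simp [hf]
    have hf1 : f (Real.pi/2) = X j j := by simp [hf]
    have hmem : τ ∈ Set.uIcc (f 0) (f (Real.pi/2)) := by
      rw [hf0, hf1, Set.mem_uIcc]
      rcases mul_nonpos_iff.1 hprod with ⟨h1, h2⟩ | ⟨h1, h2⟩
      · right; constructor <;> linarith
      · left; constructor <;> linarith
    obtain ⟨θ₀, _, hθ₀⟩ := intermediate_value_uIcc (hcont.continuousOn) hmem
    -- rotate
    set G := giv j θ₀ with hG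
    have hGorth : Gᵀ * G = 1 := giv_orth j hj θ₀
    set X' := G * X * Gᵀ with hX'
    have hX'00 : X' 0 0 = τ := by
      rw [hX', giv_entry00 j hj θ₀ X hX]
      rw [hf] at hθ₀
      exact hθ₀
    have hX'sym : X'ᵀ = X' := by
      rw [hX']
      rw [Matrix.transpose_mul, Matrix.transpose_mul, Matrix.transpose_transpose, hX,
        Matrix.mul_assoc]
    have htrX' : Matrix.trace X' = Matrix.trace X := by
      rw [hX', Matrix.trace_mul_cycle, hGorth, Matrix.one_mul]
    -- submatrix
    set Z := X'.submatrix Fin.succ Fin.succ with hZ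
    have hZsym : Zᵀ = Z := by
      rw [hZ, Matrix.transpose_submatrix, hX'sym]
    have htrZ : Matrix.trace Z = q * τ := by
      have e1 : Matrix.trace X' = X' 0 0 + Matrix.trace Z := by
        rw [Matrix.trace, Matrix.trace, Fin.sum_univ_succ]
        simp [hZ, Matrix.diag]
      rw [htrX', htr, hX'00] at e1
      push_cast at e1
      linarith
    obtain ⟨W, hWorth, hWdiag⟩ := IH Z hZsym
    -- the common diagonal value is τ
    set l₀ : Fin q := ⟨0, hq⟩ with hl₀
    have hval : (W * Z * Wᵀ) l₀ l₀ = τ := by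
      have htrWZ : Matrix.trace (W * Z * Wᵀ) = Matrix.trace Z := by
        rw [Matrix.trace_mul_cycle, hWorth, Matrix.one_mul]
      have hsum : Matrix.trace (W * Z * Wᵀ) = q * (W * Z * Wᵀ) l₀ l₀ := by
        rw [Matrix.trace]
        simp only [Matrix.diag_apply]
        rw [Finset.sum_congr rfl (fun l _ => hWdiag l l₀), Finset.sum_const,
          Finset.card_univ]
        simp [mul_comm]
      have hq' : (q : ℝ) ≠ 0 := Nat.cast_ne_zero.2 hq.ne'
      have heq : (q : ℝ) * τ = q * (W * Z * Wᵀ) l₀ l₀ := by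
        rw [← htrZ, ← htrWZ, hsum]
      exact (mul_left_cancel₀ hq' heq).symm
    refine ⟨emb W * G, ?_, ?_⟩
    · rw [Matrix.transpose_mul, Matrix.mul_assoc, ← Matrix.mul_assoc (emb W)ᵀ,
        emb_orth W hWorth, Matrix.one_mul, hGorth]
    · have hconj : emb W * G * X * (emb W * G)ᵀ = emb W * X' * (emb W)ᵀ := by
        rw [Matrix.transpose_mul, hX']
        simp only [Matrix.mul_assoc]
      rw [hconj]
      have hdiag : ∀ l : Fin (q+1), (emb W * X' * (emb W)ᵀ) l l = τ := by
        intro l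
        refine Fin.cases ?_ (fun l' => ?_) l
        · rw [emb_diag0 W X', hX'00]
        · rw [emb_diag_succ W X' l', ← hZ, hWdiag l' l₀, hval]
      intro l l'
      rw [hdiag l, hdiag l']
end Horn2



lemma sum_range_drop (L a : ℕ) (f : ℕ → ℝ) (hLa : L ≤ a)
    (hzero : ∀ m, L ≤ m → m < a → f m = 0) :
    ∑ i ∈ range a, f i = ∑ i ∈ range L, f i :=
  (Finset.sum_subset (Finset.range_subset_range.2 hLa)
    (fun m hm hnx => hzero m (by simpa using hnx) (by simpa using hm))).symm

lemma trace_DYD {k n : ℕ} (σ : ℕ → ℝ) (D : Matrix (Fin k) (Fin n) ℝ)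
    (hD : ∀ (i : Fin k) (j : Fin n), D i j = if (i : ℕ) = (j : ℕ) then σ (i : ℕ) else 0)
    (Y : Matrix (Fin n) (Fin n) ℝ) :
    Matrix.trace (D * Y * Dᵀ)
      = ∑ i : Fin k, σ (i : ℕ) ^ 2 *
          (if h : (i : ℕ) < n then Y ⟨i, h⟩ ⟨i, h⟩ else 0) := by
  rw [Matrix.trace]
  simp only [Matrix.diag_apply]
  refine Finset.sum_congr rfl fun i _ => ?_
  by_cases hi : (i : ℕ) < n
  · set a₀ : Fin n := ⟨i, hi⟩ with ha₀
    have hrow : ∀ b : Fin n, D i b = if b = a₀ then σ (i : ℕ) else 0 := by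
      intro b
      rcases eq_or_ne b a₀ with h | h
      · subst h; simp [hD, ha₀]
      · have hne : ¬ ((i : ℕ) = (b : ℕ)) := by
          intro hc
          exact h (Fin.ext (by rw [ha₀]; exact hc.symm))
        rw [hD]
        simp [hne, h]
    rw [Matrix.mul_apply]
    simp only [Matrix.transpose_apply]
    rw [Finset.sum_congr rfl (fun b _ => by rw [hrow b, mul_ite, mul_zero]),
      Finset.sum_ite_eq' Finset.univ a₀ (fun b => (D * Y) i b * σ (i : ℕ))]
    rw [Matrix.mul_apply,
      Finset.sum_congr rfl (fun a _ => by rw [hrow a, ite_mul, zero_mul]),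
      Finset.sum_ite_eq' Finset.univ a₀ (fun a => σ (i : ℕ) * Y a a₀)]
    simp only [Finset.mem_univ, if_true, dif_pos hi]
    ring
  · have hrow : ∀ b : Fin n, D i b = 0 := by
      intro b
      have hne : ¬ ((i : ℕ) = (b : ℕ)) := by
        have := b.isLt; omega
      rw [hD]; simp [hne]
    rw [Matrix.mul_apply]
    simp only [Matrix.transpose_apply]
    rw [Finset.sum_congr rfl (fun b _ => by rw [hrow b, mul_zero]), Finset.sum_const_zero]
    simp [hi]

lemma mse_reduce {k n p : ℕ}
    (S : Matrix (Fin n) (Fin n) ℝ) (hS : S.PosDef)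
    (Γ : Matrix (Fin k) (Fin n) ℝ)
    (c : ℝ)
    (σ : ℕ → ℝ)
    (Usvd : Matrix (Fin k) (Fin k) ℝ) (hUsvd : Usvdᵀ * Usvd = 1)
    (Vsvd : Matrix (Fin n) (Fin n) ℝ) (hVsvd : Vsvdᵀ * Vsvd = 1)
    (hsvd : Γ * oldPosSemidefSqrt hS.posSemidef = Usvd * (Matrix.of fun (i : Fin k) (j : Fin n) =>
          if (i : ℕ) = (j : ℕ) then σ (i : ℕ) else 0) * Vsvdᵀ)
    (A : Matrix (Fin p) (Fin n) ℝ)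
    (B : Matrix (Fin p) (Fin n) ℝ) (hB : B = A * oldPosSemidefSqrt hS.posSemidef)
    (Q : Matrix (Fin p) (Fin p) ℝ) (hQ : Qᵀ * Q = 1)
    (x : Fin p → ℝ) (hx0 : ∀ j, 0 ≤ x j)
    (hspec : B * Bᵀ = Q * Matrix.diagonal x * Qᵀ)
    (γ : ℝ) (hγ : γ = c * ⨆ l, (B * Bᵀ) l l) (hγpos : 0 < γ) :
    hlMSE S Γ c A = (∑ i : Fin k, σ (i : ℕ) ^ 2 *
          (if h : (i : ℕ) < n then (1 : Matrix (Fin n) (Fin n) ℝ) ⟨i, h⟩ ⟨i, h⟩ else 0))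
      - ∑ i : Fin k, σ (i : ℕ) ^ 2 * (if h : (i : ℕ) < n then
          ((Qᵀ * B * Vsvd)ᵀ * Matrix.diagonal (fun j => (x j + γ)⁻¹) * (Qᵀ * B * Vsvd))
            ⟨i, h⟩ ⟨i, h⟩ else 0) := by
  classical
  set R := oldPosSemidefSqrt hS.posSemidef with hRdef
  have hRsym : Rᵀ = R := by
    have h : Rᴴ = R := oldPosSemidefSqrt_conjTranspose hS.posSemidef
    rwa [Matrix.conjTranspose_eq_transpose_of_trivial] at h
  have hRR : R * R = S := oldPosSemidefSqrt_mul_self hS.posSemidef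
  set D := (Matrix.of fun (i : Fin k) (j : Fin n) =>
        if (i : ℕ) = (j : ℕ) then σ (i : ℕ) else 0) with hDdef
  have hDapp : ∀ (i : Fin k) (j : Fin n), D i j = if (i : ℕ) = (j : ℕ) then σ (i : ℕ) else 0 :=
    fun i j => rfl
  set G := Γ * R with hG
  have hGsvd : G = Usvd * D * Vsvdᵀ := hsvd
  -- cancellation lemmas
  have hVVt : Vsvd * Vsvdᵀ = 1 := mul_eq_one_comm.mp hVsvd
  have hQQt : Q * Qᵀ = 1 := mul_eq_one_comm.mp hQ
  have cVt : ∀ {m : Type} [Fintype m] (Z : Matrix (Fin n) m ℝ), Vsvdᵀ * (Vsvd * Z) = Z := by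
    intro m _ Z; rw [← Matrix.mul_assoc, hVsvd, Matrix.one_mul]
  have cQt : ∀ {m : Type} [Fintype m] (Z : Matrix (Fin p) m ℝ), Qᵀ * (Q * Z) = Z := by
    intro m _ Z; rw [← Matrix.mul_assoc, hQ, Matrix.one_mul]
  have cQ : ∀ {m : Type} [Fintype m] (Z : Matrix (Fin p) m ℝ), Q * (Qᵀ * Z) = Z := by
    intro m _ Z; rw [← Matrix.mul_assoc, hQQt, Matrix.one_mul]
  -- basic rewrites
  have hASA : A * S * Aᵀ = B * Bᵀ := by
    rw [hB, ← hRR, Matrix.transpose_mul, hRsym]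
    simp only [Matrix.mul_assoc]
  have hGSA : Γ * S * Aᵀ = G * Bᵀ := by
    rw [hB, hG, ← hRR, Matrix.transpose_mul, hRsym]
    simp only [Matrix.mul_assoc]
  have hASG : A * S * Γᵀ = B * Gᵀ := by
    rw [hB, hG, ← hRR, Matrix.transpose_mul, hRsym]
    simp only [Matrix.mul_assoc]
  have hGSG : Γ * S * Γᵀ = G * Gᵀ := by
    rw [hG, ← hRR, Matrix.transpose_mul, hRsym]
    simp only [Matrix.mul_assoc]
  -- inverse of the regularized matrix
  set E := Matrix.diagonal (fun j : Fin p => (x j + γ)⁻¹) with hE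
  have hMspec : B * Bᵀ + γ • (1 : Matrix (Fin p) (Fin p) ℝ)
      = Q * Matrix.diagonal (fun j => x j + γ) * Qᵀ := by
    have hdsum : Matrix.diagonal (fun j : Fin p => x j + γ)
        = Matrix.diagonal x + γ • (1 : Matrix (Fin p) (Fin p) ℝ) := by
      rw [Matrix.smul_one_eq_diagonal, Matrix.diagonal_add]
    rw [hspec, hdsum, Matrix.mul_add, Matrix.add_mul]
    congr 1
    rw [Matrix.mul_smul, Matrix.mul_one, Matrix.smul_mul, hQQt]
  have hMinv : (B * Bᵀ + γ • (1 : Matrix (Fin p) (Fin p) ℝ))⁻¹ = Q * E * Qᵀ := by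
    apply Matrix.inv_eq_right_inv
    have hone : (fun j => (x j + γ) * (x j + γ)⁻¹) = fun _ : Fin p => (1 : ℝ) :=
      funext fun j => mul_inv_cancel₀ (by have := hx0 j; linarith)
    have hDE : (Matrix.diagonal fun j : Fin p => x j + γ) * E = 1 := by
      rw [hE, Matrix.diagonal_mul_diagonal, hone, Matrix.diagonal_one]
    rw [hMspec]
    calc (Q * Matrix.diagonal (fun j => x j + γ) * Qᵀ) * (Q * E * Qᵀ)
        = Q * ((Matrix.diagonal (fun j => x j + γ) * E) * Qᵀ) := by
          simp only [Matrix.mul_assoc, cQt]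
      _ = 1 := by rw [hDE, Matrix.one_mul, hQQt]
  -- decomposition of B
  set P := Qᵀ * B * Vsvd with hP
  have hBdecomp : B = Q * P * Vsvdᵀ := by
    rw [hP]
    simp only [Matrix.mul_assoc, hVVt, Matrix.mul_one, cQ]
  -- trace conjugation
  have htrconj : ∀ W : Matrix (Fin k) (Fin k) ℝ,
      Matrix.trace (Usvd * W * Usvdᵀ) = Matrix.trace W := by
    intro W
    rw [Matrix.trace_mul_cycle, hUsvd, Matrix.one_mul]
  -- total trace
  have htotal : Matrix.trace (Γ * S * Γᵀ)
      = ∑ i : Fin k, σ (i : ℕ) ^ 2 *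
          (if h : (i : ℕ) < n then (1 : Matrix (Fin n) (Fin n) ℝ) ⟨i, h⟩ ⟨i, h⟩ else 0) := by
    have hGGt : G * Gᵀ = Usvd * (D * (1 : Matrix (Fin n) (Fin n) ℝ) * Dᵀ) * Usvdᵀ := by
      rw [hGsvd, Matrix.mul_one]
      simp only [Matrix.transpose_mul, Matrix.transpose_transpose]
      simp only [Matrix.mul_assoc, cVt]
    rw [hGSG, hGGt, htrconj, trace_DYD σ D hDapp 1]
  -- the main trace term
  have hterm : Γ * S * Aᵀ *
        (A * S * Aᵀ + (c * (⨆ l : Fin p, (A * S * Aᵀ) l l)) • (1 : Matrix (Fin p) (Fin p) ℝ))⁻¹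
        * A * S * Γᵀ = Usvd * (D * (Pᵀ * E * P) * Dᵀ) * Usvdᵀ := by
    have e0 : Γ * S * Aᵀ *
        (A * S * Aᵀ + (c * (⨆ l : Fin p, (A * S * Aᵀ) l l)) • (1 : Matrix (Fin p) (Fin p) ℝ))⁻¹
        * A * S * Γᵀ
        = (Γ * S * Aᵀ) *
          ((A * S * Aᵀ + (c * (⨆ l : Fin p, (A * S * Aᵀ) l l)) • (1 : Matrix (Fin p) (Fin p) ℝ))⁻¹
          * (A * S * Γᵀ)) := by
      simp only [Matrix.mul_assoc]
    rw [e0, hASA, ← hγ, hMinv, hGSA, hASG, hGsvd, hBdecomp]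
    simp only [Matrix.transpose_mul, Matrix.transpose_transpose]
    simp only [Matrix.mul_assoc, cVt, cQt]
  -- put it together
  rw [hlMSE, htotal, hterm, htrconj, trace_DYD σ D hDapp (Pᵀ * E * P)]

set_option maxHeartbeats 1000000 in
/-- **paper's Theorem 1.** With `Γ̃ = ΓΣ^{1/2} = U' D V'ᵀ` an SVD with
descending singular values `σ` (padded by zeros), and `ζ` the waterfilling threshold solving
`(c/p)Σᵢ₌₁^p (ζσᵢ−1)⁺ = 1`, the infimum of `MSE(A)` over nonzero `A ∈ ℝ^{p×n}` is attained
and equals `Σᵢ₌₁^k σᵢ²/((ζσᵢ−1)⁺+1)` if `p ≥ k`, and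
`Σᵢ₌₁^p σᵢ²/((ζσᵢ−1)⁺+1) + Σᵢ₌ₚ₊₁^k σᵢ²` if `p < k`; moreover a minimizer has the form
`A* = U Λ V'ᵀ Σ^{−1/2}` with `U` orthogonal equalizing the diagonal of `UΛΛᵀUᵀ` and
`(Λ)ᵢᵢ² = (c/p)(ζσᵢ−1)⁺`. -/
theorem hardware_limited_task_based_quantizer_optimum
    {k n p : ℕ} (hp : 0 < p) (hk : 0 < k)
    (S : Matrix (Fin n) (Fin n) ℝ) (hS : S.PosDef)
    (Γ : Matrix (Fin k) (Fin n) ℝ) (hΓ : Γ ≠ 0)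
    (c : ℝ) (hc : 0 < c)
    (σ : ℕ → ℝ) (hσanti : Antitone σ) (hσ0 : ∀ i, 0 ≤ σ i)
    (hσpad : ∀ i, min k n ≤ i → σ i = 0)
    (Usvd : Matrix (Fin k) (Fin k) ℝ) (hUsvd : Usvdᵀ * Usvd = 1)
    (Vsvd : Matrix (Fin n) (Fin n) ℝ) (hVsvd : Vsvdᵀ * Vsvd = 1)
    (hsvd : Γ * oldPosSemidefSqrt hS.posSemidef
      = Usvd * (Matrix.of fun (i : Fin k) (j : Fin n) =>
          if (i : ℕ) = (j : ℕ) then σ (i : ℕ) else 0) * Vsvdᵀ)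
    (ζ : ℝ) (hζpos : 0 < ζ)
    (hζ : (c / p) * ∑ i : Fin p, max (ζ * σ (i : ℕ) - 1) 0 = 1) :
    (∀ A : Matrix (Fin p) (Fin n) ℝ, A ≠ 0 →
      (if k ≤ p then ∑ i : Fin k, σ (i : ℕ) ^ 2 / (max (ζ * σ (i : ℕ) - 1) 0 + 1)
        else (∑ i : Fin p, σ (i : ℕ) ^ 2 / (max (ζ * σ (i : ℕ) - 1) 0 + 1))
          + ∑ i ∈ Finset.Ico p k, σ i ^ 2)
        ≤ hlMSE S Γ c A) ∧
    ∃ (U : Matrix (Fin p) (Fin p) ℝ) (Λ : Matrix (Fin p) (Fin n) ℝ),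
      Uᵀ * U = 1 ∧
      (∀ (i : Fin p) (j : Fin n), (i : ℕ) ≠ (j : ℕ) → Λ i j = 0) ∧
      (∀ (i : Fin p) (j : Fin n), (i : ℕ) = (j : ℕ) →
        Λ i j ^ 2 = (c / p) * max (ζ * σ (i : ℕ) - 1) 0) ∧
      (∀ l l' : Fin p, (U * Λ * Λᵀ * Uᵀ) l l = (U * Λ * Λᵀ * Uᵀ) l' l') ∧
      U * Λ * Vsvdᵀ * (oldPosSemidefSqrt hS.posSemidef)⁻¹ ≠ 0 ∧
      hlMSE S Γ c (U * Λ * Vsvdᵀ * (oldPosSemidefSqrt hS.posSemidef)⁻¹)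
        = (if k ≤ p then ∑ i : Fin k, σ (i : ℕ) ^ 2 / (max (ζ * σ (i : ℕ) - 1) 0 + 1)
            else (∑ i : Fin p, σ (i : ℕ) ^ 2 / (max (ζ * σ (i : ℕ) - 1) 0 + 1))
              + ∑ i ∈ Finset.Ico p k, σ i ^ 2) := by
  classical
  have hp' : (p : ℝ) ≠ 0 := Nat.cast_ne_zero.2 hp.ne'
  have hppos : (0:ℝ) < (p:ℝ) := Nat.cast_pos.2 hp
  set R := oldPosSemidefSqrt hS.posSemidef with hRdef
  have hRsym : Rᵀ = R := by
    have h : Rᴴ = R := oldPosSemidefSqrt_conjTranspose hS.posSemidef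
    rwa [Matrix.conjTranspose_eq_transpose_of_trivial] at h
  have hRR : R * R = S := oldPosSemidefSqrt_mul_self hS.posSemidef
  have hdetR : IsUnit R.det := by
    have h2 : R.det * R.det = S.det := by rw [← Matrix.det_mul, hRR]
    have h3 := hS.det_pos
    have h4 : R.det ≠ 0 := by
      intro h
      rw [h, mul_zero] at h2
      linarith
    exact isUnit_iff_ne_zero.2 h4
  have hVVt : Vsvd * Vsvdᵀ = 1 := mul_eq_one_comm.mp hVsvd
  have cVt : ∀ {m : Type} [Fintype m] (Z : Matrix (Fin n) m ℝ), Vsvdᵀ * (Vsvd * Z) = Z := by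
    intro m _ Z; rw [← Matrix.mul_assoc, hVsvd, Matrix.one_mul]
  have cV : ∀ {m : Type} [Fintype m] (Z : Matrix (Fin n) m ℝ), Vsvd * (Vsvdᵀ * Z) = Z := by
    intro m _ Z; rw [← Matrix.mul_assoc, hVVt, Matrix.one_mul]
  -- waterfilling weights
  have ht0 : ∀ m, 0 ≤ max (ζ * σ m - 1) 0 := fun m => le_max_right _ _
  have htpos : ∀ m, (0:ℝ) < max (ζ * σ m - 1) 0 + 1 := fun m => by have := ht0 m; linarith
  have htsum : ∑ j : Fin p, max (ζ * σ (j : ℕ) - 1) 0 = (p : ℝ) / c := by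
    have h := hζ
    field_simp at h
    rw [eq_div_iff (ne_of_gt hc)]
    linarith
  have htzero : ∀ m, min k n ≤ m → max (ζ * σ m - 1) 0 = 0 := by
    intro m hm
    rw [hσpad m hm]
    simp
  have hσzero_of_k : ∀ m, k ≤ m → σ m = 0 := fun m hm =>
    hσpad m (le_trans (min_le_left _ _) hm)
  have hσzero_of_n : ∀ m, n ≤ m → σ m = 0 := fun m hm =>
    hσpad m (le_trans (min_le_right _ _) hm)
  -- value identity
  set T := ∑ j : Fin p, σ (j : ℕ) ^ 2 * (max (ζ * σ (j : ℕ) - 1) 0 / (max (ζ * σ (j : ℕ) - 1) 0 + 1)) with hT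
  set total := ∑ i : Fin k, σ (i : ℕ) ^ 2 with htotaldef
  have hperterm : ∀ m : ℕ, σ m ^ 2 - σ m ^ 2 * (max (ζ * σ m - 1) 0 / (max (ζ * σ m - 1) 0 + 1))
      = σ m ^ 2 / (max (ζ * σ m - 1) 0 + 1) := by
    intro m
    have h := htpos m
    field_simp
    ring
  have hval : (if k ≤ p then ∑ i : Fin k, σ (i : ℕ) ^ 2 / (max (ζ * σ (i : ℕ) - 1) 0 + 1)
        else (∑ i : Fin p, σ (i : ℕ) ^ 2 / (max (ζ * σ (i : ℕ) - 1) 0 + 1))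
          + ∑ i ∈ Finset.Ico p k, σ i ^ 2) = total - T := by
    have hTrange : T = ∑ m ∈ Finset.range p,
        σ m ^ 2 * (max (ζ * σ m - 1) 0 / (max (ζ * σ m - 1) 0 + 1)) := by
      rw [hT]
      exact Fin.sum_univ_eq_sum_range (fun m => σ m ^ 2 * (max (ζ * σ m - 1) 0 / (max (ζ * σ m - 1) 0 + 1))) p
    have htotrange : total = ∑ m ∈ Finset.range k, σ m ^ 2 := by
      rw [htotaldef]
      exact Fin.sum_univ_eq_sum_range (fun m => σ m ^ 2) k
    by_cases hkp : k ≤ p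
    · rw [if_pos hkp]
      have hTk : T = ∑ m ∈ Finset.range k,
          σ m ^ 2 * (max (ζ * σ m - 1) 0 / (max (ζ * σ m - 1) 0 + 1)) := by
        rw [hTrange]
        exact sum_range_drop k p _ hkp (fun m hm _ => by rw [hσzero_of_k m hm]; simp)
      rw [hTk, htotrange, ← Finset.sum_sub_distrib]
      rw [Finset.sum_congr rfl (fun m _ => hperterm m)]
      exact (Fin.sum_univ_eq_sum_range (fun m => σ m ^ 2 / (max (ζ * σ m - 1) 0 + 1)) k)
    · push_neg at hkp
      rw [if_neg (not_le.2 hkp)]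
      have hsplit : total = (∑ m ∈ Finset.range p, σ m ^ 2) + ∑ m ∈ Finset.Ico p k, σ m ^ 2 := by
        rw [htotrange, ← Finset.sum_range_add_sum_Ico _ (le_of_lt hkp)]
      rw [hsplit, hTrange]
      have h1 : (∑ m ∈ Finset.range p, σ m ^ 2)
          - ∑ m ∈ Finset.range p, σ m ^ 2 * (max (ζ * σ m - 1) 0 / (max (ζ * σ m - 1) 0 + 1))
          = ∑ m ∈ Finset.range p, σ m ^ 2 / (max (ζ * σ m - 1) 0 + 1) := by
        rw [← Finset.sum_sub_distrib]
        exact Finset.sum_congr rfl (fun m _ => hperterm m)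
      have h2 : (∑ i : Fin p, σ (i:ℕ) ^ 2 / (max (ζ * σ (i:ℕ) - 1) 0 + 1))
          = ∑ m ∈ Finset.range p, σ m ^ 2 / (max (ζ * σ m - 1) 0 + 1) :=
        Fin.sum_univ_eq_sum_range (fun m => σ m ^ 2 / (max (ζ * σ m - 1) 0 + 1)) p
      rw [h2]
      linarith
  -- the constant-1 diagonal sum equals total
  have honesum : (∑ i : Fin k, σ (i : ℕ) ^ 2 *
      (if h : (i : ℕ) < n then (1 : Matrix (Fin n) (Fin n) ℝ) ⟨i, h⟩ ⟨i, h⟩ else 0)) = total := by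
    refine Finset.sum_congr rfl fun i _ => ?_
    by_cases hi : (i : ℕ) < n
    · rw [dif_pos hi, Matrix.one_apply_eq, mul_one]
    · rw [dif_neg hi, mul_zero, hσzero_of_n i (le_of_not_gt hi)]
      ring
  constructor
  · -- PART 1: lower bound
    intro A hA
    set B := A * R with hBdef
    have hBne : B ≠ 0 := by
      intro h
      apply hA
      calc A = A * (R * R⁻¹) := by rw [Matrix.mul_nonsing_inv R hdetR, Matrix.mul_one]
        _ = B * R⁻¹ := by rw [← Matrix.mul_assoc]
        _ = 0 := by rw [h, Matrix.zero_mul]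
    -- spectral theorem for B Bᵀ
    have hBBpsd : (B * Bᵀ).PosSemidef := by
      rw [← Matrix.conjTranspose_eq_transpose_of_trivial]
      exact Matrix.posSemidef_self_mul_conjTranspose B
    have hBBherm := hBBpsd.1
    set x := hBBherm.eigenvalues with hx
    have hx0 : ∀ j, 0 ≤ x j := fun j => hBBpsd.eigenvalues_nonneg j
    set Q := (hBBherm.eigenvectorUnitary : Matrix (Fin p) (Fin p) ℝ) with hQdef
    have hQorth : Qᵀ * Q = 1 := by
      have h := Matrix.mem_unitaryGroup_iff'.mp hBBherm.eigenvectorUnitary.2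
      rwa [Matrix.star_eq_conjTranspose, Matrix.conjTranspose_eq_transpose_of_trivial] at h
    have hQQt : Q * Qᵀ = 1 := mul_eq_one_comm.mp hQorth
    have cQt : ∀ {m : Type} [Fintype m] (Z : Matrix (Fin p) m ℝ), Qᵀ * (Q * Z) = Z := by
      intro m _ Z; rw [← Matrix.mul_assoc, hQorth, Matrix.one_mul]
    have hspec : B * Bᵀ = Q * Matrix.diagonal x * Qᵀ := by
      have h := hBBherm.spectral_theorem
      rw [Unitary.conjStarAlgAut_apply, Matrix.star_eq_conjTranspose, Matrix.conjTranspose_eq_transpose_of_trivial] at h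
      convert h using 2
      all_goals rfl
    -- the dynamic range
    set μ := ⨆ l, (B * Bᵀ) l l with hμdef
    have hdiagBB : ∀ l, (B * Bᵀ) l l = ∑ i, (B l i) ^ 2 := fun l => by
      rw [Matrix.mul_apply]
      exact Finset.sum_congr rfl fun i _ => by simp [sq]
    have hlesup : ∀ l, (B * Bᵀ) l l ≤ μ := fun l =>
      le_ciSup (f := fun l => (B * Bᵀ) l l) (Set.Finite.bddAbove (Set.finite_range _)) l
    have hμpos : 0 < μ := by
      obtain ⟨l, i, hli⟩ : ∃ l i, B l i ≠ 0 := by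
        by_contra hcon
        push_neg at hcon
        exact hBne (by ext l i; exact hcon l i)
      have h1 : 0 < (B * Bᵀ) l l := by
        rw [hdiagBB]
        exact Finset.sum_pos' (fun i _ => sq_nonneg _) ⟨i, Finset.mem_univ i, by positivity⟩
      exact lt_of_lt_of_le h1 (hlesup l)
    set γ := c * μ with hγdef
    have hγpos : 0 < γ := mul_pos hc hμpos
    -- trace of B Bᵀ
    have htrBB : Matrix.trace (B * Bᵀ) = ∑ l, (B * Bᵀ) l l := by
      rw [Matrix.trace]
      exact Finset.sum_congr rfl fun l _ => rfl
    have htrx : ∑ j, x j = Matrix.trace (B * Bᵀ) := by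
      rw [hspec, Matrix.trace_mul_cycle, hQorth, Matrix.one_mul, Matrix.trace_diagonal]
    have hxsum : ∑ j, x j ≤ (p : ℝ) * γ / c := by
      have h1 : Matrix.trace (B * Bᵀ) ≤ (p : ℝ) * μ := by
        rw [htrBB]
        calc ∑ l, (B * Bᵀ) l l ≤ ∑ _l : Fin p, μ := Finset.sum_le_sum fun l _ => hlesup l
          _ = (p : ℝ) * μ := by rw [Finset.sum_const, Finset.card_univ]; simp [mul_comm]
      have h2 : (p : ℝ) * γ / c = (p : ℝ) * μ := by
        rw [hγdef]; field_simp
      rw [h2, htrx]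
      exact h1
    -- apply the reduction
    have hmse := mse_reduce S hS Γ c σ Usvd hUsvd Vsvd hVsvd hsvd A B hBdef Q hQorth x hx0
      hspec γ (by rw [hγdef, hμdef]) hγpos
    rw [honesum] at hmse
    set P := Qᵀ * B * Vsvd with hPdef
    set Y := Pᵀ * Matrix.diagonal (fun j => (x j + γ)⁻¹) * P with hYdef
    -- P facts
    have hPPt : P * Pᵀ = Matrix.diagonal x := by
      rw [hPdef]
      simp only [Matrix.transpose_mul, Matrix.transpose_transpose]
      calc Qᵀ * B * Vsvd * (Vsvdᵀ * (Bᵀ * Q))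
          = Qᵀ * (B * (Vsvd * (Vsvdᵀ * (Bᵀ * Q)))) := by simp only [Matrix.mul_assoc]
        _ = Qᵀ * (B * Bᵀ * Q) := by rw [cV]; simp only [Matrix.mul_assoc]
        _ = Matrix.diagonal x := by
            rw [hspec]
            calc Qᵀ * (Q * Matrix.diagonal x * Qᵀ * Q)
                = Qᵀ * (Q * (Matrix.diagonal x * (Qᵀ * Q))) := by simp only [Matrix.mul_assoc]
              _ = Matrix.diagonal x := by rw [hQorth, Matrix.mul_one, cQt]
    have hrowsum : ∀ j, ∑ a, (P j a) ^ 2 = x j := by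
      intro j
      have h := congrFun (congrFun hPPt j) j
      rw [Matrix.mul_apply] at h
      simp only [Matrix.transpose_apply, Matrix.diagonal_apply_eq] at h
      rw [← h]
      exact Finset.sum_congr rfl fun a _ => (sq (P j a)).symm ▸ by ring
    have hrowzero : ∀ j, x j = 0 → ∀ a, P j a = 0 := by
      intro j hj a
      have h := hrowsum j
      rw [hj] at h
      have := Finset.sum_eq_zero_iff_of_nonneg (fun a _ => sq_nonneg (P j a)) |>.1 h a
        (Finset.mem_univ a)
      exact pow_eq_zero_iff (by norm_num) |>.1 this
    have hrowortho : ∀ j l, j ≠ l → ∑ a, P j a * P l a = 0 := by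
      intro j l hjl
      have h := congrFun (congrFun hPPt j) l
      rw [Matrix.mul_apply] at h
      simp only [Matrix.transpose_apply, Matrix.diagonal_apply_ne _ hjl] at h
      exact h
    -- the doubly substochastic matrix
    set Am : Fin n → Fin p → ℝ := fun a j => if x j = 0 then 0 else (P j a) ^ 2 / x j with hAm
    have hAm0 : ∀ a j, 0 ≤ Am a j := by
      intro a j
      simp only [hAm]
      split
      · exact le_rfl
      · exact div_nonneg (sq_nonneg _) (hx0 j)
    have hrow' : ∀ j, ∑ a, Am a j ≤ 1 := by
      intro j
      by_cases hxj : x j = 0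
      · simp [hAm, hxj]
      · simp only [hAm, if_neg hxj]
        rw [← Finset.sum_div, hrowsum j, div_self hxj]
    have hcol' : ∀ a, ∑ j, Am a j ≤ 1 := by
      intro a
      set Ph : Matrix (Fin p) (Fin n) ℝ :=
        Matrix.of fun j b => if x j = 0 then 0 else P j b / Real.sqrt (x j) with hPh
      have hPhPht : Ph * Phᵀ = Matrix.diagonal (fun j => if x j = 0 then (0:ℝ) else 1) := by
        ext j l
        rw [Matrix.mul_apply]
        simp only [Matrix.transpose_apply]
        by_cases hxj : x j = 0
        · have hz : ∀ b, Ph j b * Ph l b = 0 := fun b => by simp [hPh, hxj]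
          rw [Finset.sum_congr rfl (fun b _ => hz b), Finset.sum_const_zero]
          rcases eq_or_ne j l with h | h
          · subst h; simp [Matrix.diagonal_apply_eq, hxj]
          · rw [Matrix.diagonal_apply_ne _ h]
        · by_cases hxl : x l = 0
          · have hz : ∀ b, Ph j b * Ph l b = 0 := fun b => by simp [hPh, hxl]
            rw [Finset.sum_congr rfl (fun b _ => hz b), Finset.sum_const_zero]
            have h : j ≠ l := fun hc => hxj (hc ▸ hxl)
            rw [Matrix.diagonal_apply_ne _ h]
          · have hstep : ∀ b, Ph j b * Ph l b
                = (P j b * P l b) / (Real.sqrt (x j) * Real.sqrt (x l)) := by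
              intro b
              simp only [hPh, Matrix.of_apply, if_neg hxj, if_neg hxl]
              rw [div_mul_div_comm]
            rw [Finset.sum_congr rfl (fun b _ => hstep b), ← Finset.sum_div]
            rcases eq_or_ne j l with h | h
            · subst h
              rw [Matrix.diagonal_apply_eq]
              have h1 : ∑ b, P j b * P j b = x j := by
                rw [← hrowsum j]
                exact Finset.sum_congr rfl fun b _ => (sq (P j b)) ▸ by ring
              rw [h1, Real.mul_self_sqrt (hx0 j), div_self hxj, if_neg hxj]
            · rw [hrowortho j l h, Matrix.diagonal_apply_ne _ h, zero_div]
      set N := Phᵀ * Ph with hN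
      have hdPh : Matrix.diagonal (fun j => if x j = 0 then (0:ℝ) else 1) * Ph = Ph := by
        ext j b
        rw [Matrix.diagonal_mul]
        by_cases hxj : x j = 0 <;> simp [hPh, hxj]
      have hNidem : N * N = N := by
        rw [hN]
        calc Phᵀ * Ph * (Phᵀ * Ph) = Phᵀ * ((Ph * Phᵀ) * Ph) := by simp only [Matrix.mul_assoc]
          _ = Phᵀ * Ph := by rw [hPhPht, hdPh]
      have hNsym : ∀ a l, N a l = N l a := by
        intro a l
        rw [hN, Matrix.mul_apply, Matrix.mul_apply]
        exact Finset.sum_congr rfl fun j _ => by simp [Matrix.transpose_apply]; ring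
      have hNaa : N a a = ∑ j, Am a j := by
        rw [hN, Matrix.mul_apply]
        refine Finset.sum_congr rfl fun j _ => ?_
        simp only [Matrix.transpose_apply, hAm, hPh, Matrix.of_apply]
        by_cases hxj : x j = 0
        · simp [hxj]
        · rw [if_neg hxj, if_neg hxj, div_mul_div_comm, Real.mul_self_sqrt (hx0 j)]
          rw [sq]
      have hNsq : N a a = ∑ l, (N a l) ^ 2 := by
        have h := congrFun (congrFun hNidem a) a
        rw [Matrix.mul_apply] at h
        rw [← h]
        exact Finset.sum_congr rfl fun l _ => by rw [hNsym a l, sq]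
      have h2 : (N a a) ^ 2 ≤ ∑ l, (N a l) ^ 2 :=
        Finset.single_le_sum (f := fun l => (N a l) ^ 2) (fun l _ => sq_nonneg _)
          (Finset.mem_univ a)
      have h3 : 0 ≤ N a a := by
        rw [hNsq]
        exact Finset.sum_nonneg fun l _ => sq_nonneg _
      have hfinal : N a a ≤ 1 := by nlinarith [hNsq, h2, h3]
      linarith [hNaa, hfinal]
    -- diagonal entries of Y
    have hYdiag : ∀ a : Fin n, Y a a = ∑ j, Am a j * (x j / (x j + γ)) := by
      intro a
      rw [hYdef, Matrix.mul_apply]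
      have hstep : ∀ j, (Pᵀ * Matrix.diagonal fun j => (x j + γ)⁻¹) a j
          = P j a * (x j + γ)⁻¹ := by
        intro j
        rw [Matrix.mul_diagonal]
        simp [Matrix.transpose_apply]
      rw [Finset.sum_congr rfl (fun j _ => by rw [hstep j])]
      refine Finset.sum_congr rfl fun j _ => ?_
      by_cases hxj : x j = 0
      · rw [hrowzero j hxj a]
        simp [hAm, hxj]
      · simp only [hAm, Matrix.transpose_apply, if_neg hxj]
        have hxγ : x j + γ ≠ 0 := by have := hx0 j; positivity
        field_simp
    have hY0 : ∀ a : Fin n, 0 ≤ Y a a := by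
      intro a
      rw [hYdiag]
      refine Finset.sum_nonneg fun j _ => mul_nonneg (hAm0 a j) ?_
      have h1 := hx0 j
      positivity
    -- the chain of inequalities
    have hcore := core_bound n p c ζ γ hc hζpos hγpos σ hσanti hσ0 x hx0 hxsum htsum
      Am hAm0 hcol' hrow'
    have hchain : (∑ i : Fin k, σ (i : ℕ) ^ 2 * (if h : (i : ℕ) < n then
          Y ⟨i, h⟩ ⟨i, h⟩ else 0)) ≤ T := by
      set g : ℕ → ℝ := fun m => σ m ^ 2 * (if h : m < n then Y ⟨m, h⟩ ⟨m, h⟩ else 0) with hg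
      have hg0 : ∀ m, 0 ≤ g m := by
        intro m
        rw [hg]
        refine mul_nonneg (sq_nonneg _) ?_
        split
        · exact hY0 _
        · exact le_rfl
      have e1 : (∑ i : Fin k, σ (i : ℕ) ^ 2 * (if h : (i : ℕ) < n then
          Y ⟨i, h⟩ ⟨i, h⟩ else 0)) = ∑ m ∈ Finset.range k, g m :=
        Fin.sum_univ_eq_sum_range g k
      have e2 : ∑ m ∈ Finset.range k, g m ≤ ∑ m ∈ Finset.range (max k n), g m :=
        Finset.sum_le_sum_of_subset_of_nonneg (Finset.range_subset_range.2 (le_max_left _ _))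
          (fun m _ _ => hg0 m)
      have e3 : ∑ m ∈ Finset.range (max k n), g m = ∑ m ∈ Finset.range n, g m :=
        sum_range_drop n (max k n) g (le_max_right _ _)
          (fun m hm _ => by rw [hg]; simp [Nat.not_lt.2 hm])
      have e4 : ∑ m ∈ Finset.range n, g m = ∑ i : Fin n, σ (i : ℕ) ^ 2 * Y i i := by
        rw [← Fin.sum_univ_eq_sum_range g n]
        exact Finset.sum_congr rfl fun i _ => by
          rw [hg]
          simp [Fin.is_lt]
      have e5 : ∑ i : Fin n, σ (i : ℕ) ^ 2 * Y i i
          = ∑ i : Fin n, σ (i : ℕ) ^ 2 * (∑ j, Am i j * (x j / (x j + γ))) :=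
        Finset.sum_congr rfl fun i _ => by rw [hYdiag i]
      rw [e1]
      refine le_trans e2 ?_
      rw [e3, e4, e5]
      exact hcore
    rw [hval, hmse]
    have hYfold : (∑ i : Fin k, σ (i : ℕ) ^ 2 * (if h : (i : ℕ) < n then
          ((Qᵀ * B * Vsvd)ᵀ * Matrix.diagonal (fun j => (x j + γ)⁻¹) * (Qᵀ * B * Vsvd))
            ⟨i, h⟩ ⟨i, h⟩ else 0))
        = (∑ i : Fin k, σ (i : ℕ) ^ 2 * (if h : (i : ℕ) < n then
          Y ⟨i, h⟩ ⟨i, h⟩ else 0)) := rfl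
    rw [hYfold]
    linarith
  · -- PART 2: attainment
    set Λ : Matrix (Fin p) (Fin n) ℝ := Matrix.of fun (i : Fin p) (j : Fin n) =>
      if (i : ℕ) = (j : ℕ) then Real.sqrt ((c / p) * max (ζ * σ (i : ℕ) - 1) 0) else 0 with hΛ
    set yF : Fin p → ℝ := fun i => (c / p) * max (ζ * σ (i : ℕ) - 1) 0 with hyF
    have hy0 : ∀ i, 0 ≤ yF i := fun i => mul_nonneg (by positivity) (ht0 _)
    have hΛapp : ∀ i j, Λ i j = if (i : ℕ) = (j : ℕ) then Real.sqrt (yF i) else 0 :=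
      fun i j => rfl
    have hyzero : ∀ i : Fin p, n ≤ (i : ℕ) → yF i = 0 := by
      intro i hi
      rw [hyF]
      simp only
      rw [htzero _ (le_trans (min_le_right k n) hi), mul_zero]
    have hΛΛt : Λ * Λᵀ = Matrix.diagonal yF := by
      ext i l
      rw [Matrix.mul_apply]
      simp only [Matrix.transpose_apply]
      rcases eq_or_ne i l with h | h
      · subst h
        rw [Matrix.diagonal_apply_eq]
        by_cases hi : (i : ℕ) < n
        · set a₀ : Fin n := ⟨i, hi⟩ with ha₀
          have hrow : ∀ a : Fin n, Λ i a = if a = a₀ then Real.sqrt (yF i) else 0 := by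
            intro a
            rcases eq_or_ne a a₀ with ha | ha
            · subst ha
              rw [hΛapp, if_pos rfl]
              simp [ha₀]
            · have hne : ¬ ((i : ℕ) = (a : ℕ)) := by
                intro hc
                exact ha (Fin.ext (by rw [ha₀]; exact hc.symm))
              rw [hΛapp, if_neg hne, if_neg ha]
          have hz : ∀ a : Fin n, Λ i a * Λ i a
              = if a = a₀ then Real.sqrt (yF i) * Real.sqrt (yF i) else 0 := by
            intro a
            rw [hrow a]
            split <;> simp
          rw [Finset.sum_congr rfl (fun a _ => hz a),
            Finset.sum_ite_eq' Finset.univ a₀ (fun _ => Real.sqrt (yF i) * Real.sqrt (yF i))]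
          simp [Real.mul_self_sqrt (hy0 i)]
        · have hrow : ∀ a : Fin n, Λ i a = 0 := by
            intro a
            have hne : ¬ ((i : ℕ) = (a : ℕ)) := by have := a.isLt; omega
            rw [hΛapp, if_neg hne]
          rw [Finset.sum_congr rfl (fun a _ => by rw [hrow a, zero_mul]),
            Finset.sum_const_zero, hyzero i (le_of_not_gt hi)]
      · rw [Matrix.diagonal_apply_ne _ h]
        apply Finset.sum_eq_zero
        intro a _
        by_cases hia : (i : ℕ) = (a : ℕ)
        · have hla : ¬ ((l : ℕ) = (a : ℕ)) := by
            intro hc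
            exact h (Fin.ext (by omega))
          rw [hΛapp l a, if_neg hla, mul_zero]
        · rw [hΛapp i a, if_neg hia, zero_mul]
    have hsymX : (Λ * Λᵀ)ᵀ = Λ * Λᵀ := by
      rw [hΛΛt]
      exact Matrix.diagonal_transpose yF
    obtain ⟨U, hUorth, hUdiag⟩ := horn_equal_diag p (Λ * Λᵀ) hsymX
    have hUUt : U * Uᵀ = 1 := mul_eq_one_comm.mp hUorth
    have cUt : ∀ {m : Type} [Fintype m] (Z : Matrix (Fin p) m ℝ), Uᵀ * (U * Z) = Z := by
      intro m _ Z; rw [← Matrix.mul_assoc, hUorth, Matrix.one_mul]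
    have htrΛ : ∑ i, yF i = 1 := by
      rw [hyF, ← Finset.mul_sum, htsum]
      field_simp
    set l₀ : Fin p := ⟨0, hp⟩ with hl₀
    have htrU : Matrix.trace (U * (Λ * Λᵀ) * Uᵀ) = 1 := by
      rw [Matrix.trace_mul_cycle, hUorth, Matrix.one_mul, hΛΛt, Matrix.trace_diagonal, htrΛ]
    have hdval : ∀ l, (U * (Λ * Λᵀ) * Uᵀ) l l = 1 / p := by
      intro l
      have hsum : Matrix.trace (U * (Λ * Λᵀ) * Uᵀ) = p * (U * (Λ * Λᵀ) * Uᵀ) l l := by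
        rw [Matrix.trace]
        simp only [Matrix.diag_apply]
        rw [Finset.sum_congr rfl (fun l' _ => hUdiag l' l), Finset.sum_const,
          Finset.card_univ]
        simp [mul_comm]
      rw [htrU] at hsum
      rw [eq_div_iff hp']
      linarith
    set B' : Matrix (Fin p) (Fin n) ℝ := U * Λ * Vsvdᵀ with hB'
    have hB'A : B' = (U * Λ * Vsvdᵀ * R⁻¹) * R := by
      rw [Matrix.mul_assoc (U * Λ * Vsvdᵀ) R⁻¹ R, Matrix.nonsing_inv_mul R hdetR,
        Matrix.mul_one]
    have hB'spec : B' * B'ᵀ = U * Matrix.diagonal yF * Uᵀ := by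
      rw [hB']
      simp only [Matrix.transpose_mul, Matrix.transpose_transpose]
      calc U * Λ * Vsvdᵀ * (Vsvd * (Λᵀ * Uᵀ))
          = U * (Λ * (Vsvdᵀ * (Vsvd * (Λᵀ * Uᵀ)))) := by simp only [Matrix.mul_assoc]
        _ = U * (Λ * Λᵀ * Uᵀ) := by rw [cVt]; simp only [Matrix.mul_assoc]
        _ = U * Matrix.diagonal yF * Uᵀ := by rw [hΛΛt]; simp only [Matrix.mul_assoc]
    have hdval' : ∀ l, (B' * B'ᵀ) l l = 1 / p := by
      intro l
      have h1 : B' * B'ᵀ = U * (Λ * Λᵀ) * Uᵀ := by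
        rw [hB'spec, hΛΛt]
      rw [h1]
      exact hdval l
    have hsup : (⨆ l, (B' * B'ᵀ) l l) = 1 / p := by
      have hne : Nonempty (Fin p) := ⟨l₀⟩
      calc (⨆ l, (B' * B'ᵀ) l l) = ⨆ _l : Fin p, (1 : ℝ) / p := by
            congr 1
            funext l
            exact hdval' l
        _ = 1 / p := ciSup_const
    have hγeq : (c / p : ℝ) = c * ⨆ l, (B' * B'ᵀ) l l := by
      rw [hsup]
      field_simp
    have hγpos2 : (0 : ℝ) < c / p := by positivity
    have hmse := mse_reduce S hS Γ c σ Usvd hUsvd Vsvd hVsvd hsvd (U * Λ * Vsvdᵀ * R⁻¹) B'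
      hB'A U hUorth yF hy0 hB'spec (c / p) hγeq hγpos2
    rw [honesum] at hmse
    have hP' : Uᵀ * B' * Vsvd = Λ := by
      rw [hB']
      calc Uᵀ * (U * Λ * Vsvdᵀ) * Vsvd = Uᵀ * (U * (Λ * (Vsvdᵀ * Vsvd))) := by
            simp only [Matrix.mul_assoc]
        _ = Λ := by rw [hVsvd, Matrix.mul_one, cUt]
    rw [hP'] at hmse
    -- compute diagonal entries of the inner matrix
    have hYentry : ∀ a : Fin n,
        (Λᵀ * Matrix.diagonal (fun j => (yF j + c / p)⁻¹) * Λ) a a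
          = if h2 : (a : ℕ) < p then
              max (ζ * σ (a : ℕ) - 1) 0 / (max (ζ * σ (a : ℕ) - 1) 0 + 1) else 0 := by
      intro a
      rw [Matrix.mul_apply]
      have hstep : ∀ j, (Λᵀ * Matrix.diagonal fun j => (yF j + c / p)⁻¹) a j
          = Λ j a * (yF j + c / p)⁻¹ := by
        intro j
        rw [Matrix.mul_diagonal]
        simp [Matrix.transpose_apply]
      rw [Finset.sum_congr rfl (fun j _ => by rw [hstep j])]
      by_cases h2 : (a : ℕ) < p
      · set j₀ : Fin p := ⟨a, h2⟩ with hj₀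
        have hz : ∀ j : Fin p, Λ j a * (yF j + c / p)⁻¹ * Λ j a
            = if j = j₀ then (yF j₀ + c / p)⁻¹ * (Real.sqrt (yF j₀) * Real.sqrt (yF j₀))
              else 0 := by
          intro j
          rcases eq_or_ne j j₀ with hj | hj
          · subst hj
            rw [hΛapp, if_pos (by simp [hj₀]), if_pos rfl]
            ring
          · have hne : ¬ ((j : ℕ) = (a : ℕ)) := by
              intro hc
              exact hj (Fin.ext (by rw [hj₀]; exact hc))
            rw [hΛapp, if_neg hne, if_neg hj]
            simp
        rw [Finset.sum_congr rfl (fun j _ => hz j),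
          Finset.sum_ite_eq' Finset.univ j₀ _]
        rw [dif_pos h2]
        simp only [Finset.mem_univ, if_true]
        rw [Real.mul_self_sqrt (hy0 j₀)]
        have hcp : (0:ℝ) < c / p := hγpos2
        have hyj : yF j₀ = (c / p) * max (ζ * σ (a : ℕ) - 1) 0 := by rw [hyF]
        rw [hyj]
        have htp := htpos (a : ℕ)
        have hne1 : (c / p) * max (ζ * σ (a : ℕ) - 1) 0 + c / p ≠ 0 := by
          have := ht0 (a : ℕ)
          positivity
        field_simp
      · have hz : ∀ j : Fin p, Λ j a * (yF j + c / p)⁻¹ * Λ j a = 0 := by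
          intro j
          have hne : ¬ ((j : ℕ) = (a : ℕ)) := by
            have := j.isLt
            omega
          rw [hΛapp, if_neg hne, zero_mul, zero_mul]
        rw [Finset.sum_congr rfl (fun j _ => hz j), Finset.sum_const_zero, dif_neg h2]
    -- the sum equals T
    have hfinsum : (∑ i : Fin k, σ (i : ℕ) ^ 2 * (if h : (i : ℕ) < n then
          (Λᵀ * Matrix.diagonal (fun j => (yF j + c / p)⁻¹) * Λ) ⟨i, h⟩ ⟨i, h⟩ else 0)) = T := by
      set tt : ℕ → ℝ := fun m => max (ζ * σ m - 1) 0 / (max (ζ * σ m - 1) 0 + 1) with htt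
      set F : ℕ → ℝ := fun m => σ m ^ 2 *
        (if h : m < n then (if h2 : m < p then tt m else 0) else 0) with hF
      have e1 : (∑ i : Fin k, σ (i : ℕ) ^ 2 * (if h : (i : ℕ) < n then
          (Λᵀ * Matrix.diagonal (fun j => (yF j + c / p)⁻¹) * Λ) ⟨i, h⟩ ⟨i, h⟩ else 0))
          = ∑ m ∈ Finset.range k, F m := by
        rw [← Fin.sum_univ_eq_sum_range F k]
        refine Finset.sum_congr rfl fun i _ => ?_
        simp only [hF]
        by_cases hi : (i : ℕ) < n
        · rw [dif_pos hi, dif_pos hi, hYentry ⟨i, hi⟩]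
        · rw [dif_neg hi, dif_neg hi]
      set L := min k (min n p) with hL
      have e2 : ∑ m ∈ Finset.range k, F m = ∑ m ∈ Finset.range L, σ m ^ 2 * tt m := by
        rw [sum_range_drop L k F (min_le_left _ _)]
        · refine Finset.sum_congr rfl fun m hm => ?_
          have hmL := Finset.mem_range.1 hm
          have h1 : m < n := lt_of_lt_of_le hmL (le_trans (min_le_right _ _) (min_le_left _ _))
          have h2 : m < p := lt_of_lt_of_le hmL (le_trans (min_le_right _ _) (min_le_right _ _))
          simp only [hF]
          rw [dif_pos h1, dif_pos h2]
        · intro m hm hmk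
          simp only [hF]
          rcases Nat.lt_or_ge m n with h1 | h1
          · rcases Nat.lt_or_ge m p with h2 | h2
            · have hmk' : k ≤ m := by omega
              rw [hσzero_of_k m hmk']
              simp
            · rw [dif_pos h1, dif_neg (not_lt.2 h2), mul_zero]
          · rw [dif_neg (not_lt.2 h1), mul_zero]
      have e3 : T = ∑ m ∈ Finset.range L, σ m ^ 2 * tt m := by
        have e3a : T = ∑ m ∈ Finset.range p, σ m ^ 2 * tt m := by
          rw [hT, htt]
          exact Fin.sum_univ_eq_sum_range
            (fun m => σ m ^ 2 * (max (ζ * σ m - 1) 0 / (max (ζ * σ m - 1) 0 + 1))) p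
        rw [e3a]
        apply sum_range_drop L p _ (le_trans (min_le_right _ _) (min_le_right _ _))
        intro m hm hmp
        rcases Nat.lt_or_ge m k with h1 | h1
        · have h2 : n ≤ m := by omega
          rw [hσzero_of_n m h2]
          simp
        · rw [hσzero_of_k m h1]
          simp
      rw [e1, e2, e3]
    rw [hfinsum] at hmse
    -- nonzero
    obtain ⟨j₀, hj₀⟩ : ∃ j : Fin p, 0 < max (ζ * σ (j : ℕ) - 1) 0 := by
      by_contra hcon
      push_neg at hcon
      have hz : ∑ j : Fin p, max (ζ * σ (j : ℕ) - 1) 0 = 0 := le_antisymm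
        (Finset.sum_nonpos fun j _ => hcon j) (Finset.sum_nonneg fun j _ => ht0 _)
      rw [htsum] at hz
      have : (0:ℝ) < (p : ℝ) / c := by positivity
      linarith
    have hj₀n : (j₀ : ℕ) < min k n := by
      by_contra hcon
      push_neg at hcon
      rw [htzero _ hcon] at hj₀
      exact lt_irrefl 0 hj₀
    set a₀ : Fin n := ⟨j₀, lt_of_lt_of_le hj₀n (min_le_right k n)⟩ with ha₀def
    have hyj₀ : 0 < yF j₀ := mul_pos hγpos2 hj₀
    have hΛne : Λ j₀ a₀ ≠ 0 := by
      rw [hΛapp, if_pos (by simp [ha₀def])]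
      exact (Real.sqrt_pos.2 hyj₀).ne'
    have hAne : U * Λ * Vsvdᵀ * R⁻¹ ≠ 0 := by
      intro h0
      have hB0 : B' = 0 := by rw [hB'A, h0, Matrix.zero_mul]
      have hΛ0 : Λ = 0 := by
        rw [← hP', hB0, Matrix.mul_zero, Matrix.zero_mul]
      apply hΛne
      rw [hΛ0]
      rfl
    refine ⟨U, Λ, hUorth, ?_, ?_, ?_, hAne, ?_⟩
    · intro i j hij
      rw [hΛapp, if_neg hij]
    · intro i j hij
      rw [hΛapp, if_pos hij, Real.sq_sqrt (hy0 i)]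
    · intro l l'
      have h1 : U * Λ * Λᵀ * Uᵀ = U * (Λ * Λᵀ) * Uᵀ := by simp only [Matrix.mul_assoc]
      rw [h1]
      exact hUdiag l l'
    · rw [hval]
      exact hmse
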